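/- Let s₁, s₂, r, ω, s̃₁, s̃₂, r̃, ω̃ ∈ ℝ with ω ≠ 0 and ω̃ ≠ 0, and let y, ỹ ∈ ℝ³ with y₃ > 0, ỹ₃ > 0, y ≠ (0,0,r), ỹ ≠ (0,0,r̃). Write S = (s₁,s₂,0), R = (0,0,r), A = ‖y−S‖, B = ‖y−R‖, and define Φ(s₁,s₂,r,y,ω) = (s₁, s₂, r, A+B, ω(y₁−s₁)/A, ω(y₂−s₂)/A, ω(y₃−r)/B, ω) ∈ ℝ⁸ (and likewise for the tilde variables). Suppose Φ(s₁,s₂,r,y,ω) = Φ(s̃₁,s̃₂,r̃,ỹ,ω̃), and suppose the closed segment joining y and ỹ is disjoint from the closed segment joining S = (s₁,s₂,0) and R = (0,0,r). Then (s₁,s₂,r,y,ω) = (s̃₁,s̃₂,r̃,ỹ,ω̃). -/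

import Mathlib

set_option maxHeartbeats 1000000

/-- The left projection `π_L` of the canonical relation for the dense-array
borehole geometry with constant background sound speed `c₀ = 1`:
`Φ(s₁,s₂,r,y,ω) = (s₁, s₂, r, A+B, ω(y₁−s₁)/A, ω(y₂−s₂)/A, ω(y₃−r)/B, ω) ∈ ℝ⁸`,
where `S = (s₁,s₂,0)`, `R = (0,0,r)`, `A = ‖y−S‖`, `B = ‖y−R‖`. -/
noncomputable def denseArrayPiL (s₁ s₂ r : ℝ) (y : EuclideanSpace ℝ (Fin 3)) (ω : ℝ) :
    Fin 8 → ℝ :=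
  let S : EuclideanSpace ℝ (Fin 3) := WithLp.toLp 2 ![s₁, s₂, 0]
  let R : EuclideanSpace ℝ (Fin 3) := WithLp.toLp 2 ![0, 0, r]
  let A : ℝ := ‖y - S‖
  let B : ℝ := ‖y - R‖
  ![s₁, s₂, r, A + B, ω * (y 0 - s₁) / A, ω * (y 1 - s₂) / A, ω * (y 2 - r) / B, ω]

private lemma seg_aux {E : Type*} [AddCommGroup E] [Module ℝ E] {S R y : E} {g a : ℝ}
    (hg : 0 < g) (ha : 0 < a) (h : (g + a) • y = g • S + a • R) : y ∈ segment ℝ S R := by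
  have hne : g + a ≠ 0 := by positivity
  refine mem_segment_iff_div.mpr ⟨g, a, hg.le, ha.le, by positivity, ?_⟩
  rw [div_eq_inv_mul, div_eq_inv_mul, mul_smul, mul_smul, ← smul_add, ← h,
    smul_smul, inv_mul_cancel₀ hne, one_smul]

private lemma normsq3 (x : EuclideanSpace ℝ (Fin 3)) :
    ‖x‖ ^ 2 = x 0 ^ 2 + x 1 ^ 2 + x 2 ^ 2 := by
  rw [EuclideanSpace.norm_eq, Real.sq_sqrt (by positivity)]
  simp [Fin.sum_univ_three]

/-- Global injectivity of the left projection for the dense-array borehole data set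
(the Traveltime Injectivity Condition), constant background sound speed. -/
theorem denseArray_piL_injective
    (s₁ s₂ r ω t₁ t₂ r' ω' : ℝ) (hω : ω ≠ 0) (hω' : ω' ≠ 0)
    (y y' : EuclideanSpace ℝ (Fin 3)) (hy3 : y 2 > 0) (hy'3 : y' 2 > 0)
    (hyR : y ≠ ![0, 0, r]) (hy'R : y' ≠ ![0, 0, r'])
    (hΦ : denseArrayPiL s₁ s₂ r y ω = denseArrayPiL t₁ t₂ r' y' ω')
    (hdisj : Disjoint (segment ℝ y y')
      (segment ℝ (WithLp.toLp 2 ![s₁, s₂, 0] : EuclideanSpace ℝ (Fin 3))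
        (WithLp.toLp 2 ![0, 0, r] : EuclideanSpace ℝ (Fin 3)))) :
    s₁ = t₁ ∧ s₂ = t₂ ∧ r = r' ∧ y = y' ∧ ω = ω' := by
  have h0 := congrFun hΦ ⟨0, by norm_num⟩
  have h1 := congrFun hΦ ⟨1, by norm_num⟩
  have h2 := congrFun hΦ ⟨2, by norm_num⟩
  have h3 := congrFun hΦ ⟨3, by norm_num⟩
  have h4 := congrFun hΦ ⟨4, by norm_num⟩
  have h5 := congrFun hΦ ⟨5, by norm_num⟩
  have h6 := congrFun hΦ ⟨6, by norm_num⟩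
  have h7 := congrFun hΦ ⟨7, by norm_num⟩
  simp only [denseArrayPiL, Matrix.cons_val_succ', Matrix.cons_val_zero']
    at h0 h1 h2 h3 h4 h5 h6 h7
  subst h0 h1 h2 h7
  refine ⟨rfl, rfl, rfl, ?_, rfl⟩
  set S : EuclideanSpace ℝ (Fin 3) := WithLp.toLp 2 ![s₁, s₂, 0] with hS
  set R : EuclideanSpace ℝ (Fin 3) := WithLp.toLp 2 ![0, 0, r] with hR
  -- nondegeneracy
  have hyS : y ≠ S := by
    intro h; rw [h] at hy3; simp [hS] at hy3
  have hy'S : y' ≠ S := by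
    intro h; rw [h] at hy'3; simp [hS] at hy'3
  have hApos : 0 < ‖y - S‖ := by rw [norm_sub_pos_iff]; exact hyS
  have hA'pos : 0 < ‖y' - S‖ := by rw [norm_sub_pos_iff]; exact hy'S
  have hBpos : 0 < ‖y - R‖ := by rw [norm_sub_pos_iff]; intro h; exact hyR (by rw [h])
  have hB'pos : 0 < ‖y' - R‖ := by rw [norm_sub_pos_iff]; intro h; exact hy'R (by rw [h])
  -- cross-multiplied direction equalities
  have e0 : (y 0 - s₁) * ‖y' - S‖ = (y' 0 - s₁) * ‖y - S‖ := by
    rw [div_eq_div_iff hApos.ne' hA'pos.ne'] at h4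
    exact mul_left_cancel₀ hω (by linear_combination h4)
  have e1 : (y 1 - s₂) * ‖y' - S‖ = (y' 1 - s₂) * ‖y - S‖ := by
    rw [div_eq_div_iff hApos.ne' hA'pos.ne'] at h5
    exact mul_left_cancel₀ hω (by linear_combination h5)
  have e6 : (y 2 - r) * ‖y' - R‖ = (y' 2 - r) * ‖y - R‖ := by
    rw [div_eq_div_iff hBpos.ne' hB'pos.ne'] at h6
    exact mul_left_cancel₀ hω (by linear_combination h6)
  -- norm expansions
  have nS : ‖y - S‖ ^ 2 = (y 0 - s₁) ^ 2 + (y 1 - s₂) ^ 2 + (y 2) ^ 2 := by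
    rw [normsq3]; simp [hS]
  have nS' : ‖y' - S‖ ^ 2 = (y' 0 - s₁) ^ 2 + (y' 1 - s₂) ^ 2 + (y' 2) ^ 2 := by
    rw [normsq3]; simp [hS]
  -- third component of the S-direction
  have e2sq : (y 2 * ‖y' - S‖) ^ 2 = (y' 2 * ‖y - S‖) ^ 2 := by
    linear_combination -(‖y' - S‖ ^ 2) * nS + (‖y - S‖ ^ 2) * nS'
      - ((y 0 - s₁) * ‖y' - S‖ + (y' 0 - s₁) * ‖y - S‖) * e0
      - ((y 1 - s₂) * ‖y' - S‖ + (y' 1 - s₂) * ‖y - S‖) * e1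
  have e2 : y 2 * ‖y' - S‖ = y' 2 * ‖y - S‖ := by
    have hfac : (y 2 * ‖y' - S‖ - y' 2 * ‖y - S‖) * (y 2 * ‖y' - S‖ + y' 2 * ‖y - S‖) = 0 := by
      linear_combination e2sq
    rcases mul_eq_zero.mp hfac with h | h
    · exact sub_eq_zero.mp h
    · nlinarith [mul_pos hy3 hA'pos, mul_pos hy'3 hApos]
  -- y' lies on the ray from S through y
  set t : ℝ := ‖y' - S‖ / ‖y - S‖ with htdef
  have ht : 0 < t := div_pos hA'pos hApos
  have hA'eq : ‖y' - S‖ = t * ‖y - S‖ := by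
    rw [htdef]; field_simp
  have hy' : y' = S + t • (y - S) := by
    ext i
    fin_cases i
    · show y' 0 = (S + t • (y - S)) 0
      simp only [hS, PiLp.add_apply, PiLp.smul_apply, PiLp.sub_apply, smul_eq_mul,
        Matrix.cons_val_zero]
      rw [htdef]; field_simp; linear_combination -e0
    · show y' 1 = (S + t • (y - S)) 1
      simp only [hS, PiLp.add_apply, PiLp.smul_apply, PiLp.sub_apply, smul_eq_mul,
        Matrix.cons_val_one, Matrix.head_cons, Matrix.cons_val_zero]
      rw [htdef]; field_simp; linear_combination -e1
    · show y' 2 = (S + t • (y - S)) 2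
      simp only [hS, PiLp.add_apply, PiLp.smul_apply, PiLp.sub_apply, smul_eq_mul,
        Matrix.cons_val_two, Matrix.tail_cons, Matrix.head_cons, Matrix.cons_val_one,
        Matrix.cons_val_zero]
      rw [htdef]; field_simp; linear_combination -e2
  -- trichotomy on t
  rcases lt_trichotomy t 1 with htlt | hteq | htgt
  · -- t < 1 : y would be on the segment [S,R]
    exfalso
    have hkey : y' - R = (y - R) + (t - 1) • (y - S) := by rw [hy']; module
    have hnorm : ‖(y - R) + (t - 1) • (y - S)‖ = ‖y - R‖ + ‖(t - 1) • (y - S)‖ := by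
      rw [← hkey, norm_smul, Real.norm_eq_abs, abs_of_neg (by linarith)]
      linarith [h3, hA'eq]
    have hray : SameRay ℝ (y - R) ((t - 1) • (y - S)) := sameRay_iff_norm_add.mpr hnorm
    obtain ⟨a, b, ha, hb, hab⟩ := hray.exists_pos (norm_pos_iff.mp hBpos)
      (smul_ne_zero (by intro h; rw [sub_eq_zero] at h; linarith) (sub_ne_zero.mpr hyS))
    have hgpos : 0 < b * (1 - t) := mul_pos hb (by linarith)
    have h' : (b * (1 - t) + a) • y = (b * (1 - t)) • S + a • R := by
      linear_combination (norm := module) hab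
    exact Set.disjoint_left.mp hdisj (left_mem_segment ℝ y y') (seg_aux hgpos ha h')
  · -- t = 1 : y = y'
    rw [hy', hteq, one_smul]
    abel
  · -- t > 1 : y would again be on the segment [S,R]
    exfalso
    have hkey : (y' - R) + (1 - t) • (y - S) = y - R := by rw [hy']; module
    have hnorm : ‖(y' - R) + (1 - t) • (y - S)‖ = ‖y' - R‖ + ‖(1 - t) • (y - S)‖ := by
      rw [hkey, norm_smul, Real.norm_eq_abs, abs_of_neg (by linarith)]
      linarith [h3, hA'eq]
    have hray : SameRay ℝ (y' - R) ((1 - t) • (y - S)) := sameRay_iff_norm_add.mpr hnorm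
    obtain ⟨a, b, ha, hb, hab⟩ := hray.exists_pos (norm_pos_iff.mp hB'pos)
      (smul_ne_zero (by intro h; rw [sub_eq_zero] at h; linarith) (sub_ne_zero.mpr hyS))
    rw [hy'] at hab
    have hgpos : 0 < (a + b) * (t - 1) := mul_pos (by linarith) (by linarith)
    have h' : ((a + b) * (t - 1) + a) • y = ((a + b) * (t - 1)) • S + a • R := by
      linear_combination (norm := module) hab
    exact Set.disjoint_left.mp hdisj (left_mem_segment ℝ y y') (seg_aux hgpos ha h')
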